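/- Let C and D be categories with terminal objects, and let F : D → C be a functor such that the unique map F1 → 1 is an isomorphism, and such that for every morphism y : 1 → FX there is a unique x : 1 → X with y = Fx ∘ (F1 → 1)⁻¹. If T is the pointwise codensity monad of F (the pointwise right Kan extension of F along itself, with its induced monad structure), then the unit η₁ : 1 → T1 is an isomorphism. -/

import Mathlib

open CategoryTheory Limits

universe v₁ v₂ u₁ u₂

/-- If `F : D ⥤ C` is such that `F1 → 1` is an isomorphism and every point `1 ⟶ FX`
comes from a unique point `1 ⟶ X`, then the pointwise codensity monad of `F`
has invertible unit at the terminal object (i.e. it is affine). -/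
theorem affine_of_pointwise_codensity
    {C : Type u₁} {D : Type u₂} [Category.{v₁} C] [Category.{v₂} D]
    [HasTerminal C] [HasTerminal D] (F : D ⥤ C)
    (h1 : IsIso (terminal.from (F.obj (⊤_ D))))
    (h2 : ∀ (X : D) (y : ⊤_ C ⟶ F.obj X),
      ∃! x : ⊤_ D ⟶ X, y = inv (terminal.from (F.obj (⊤_ D))) ≫ F.map x)
    -- `(T, ε)` is the pointwise right Kan extension of `F` along itself
    (T : C ⥤ C) (ε : F ⋙ T ⟶ F)
    (hT : (Functor.RightExtension.mk T ε).IsPointwiseRightKanExtension)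
    -- `η` is the unit of the induced (codensity) monad structure on `T`
    (η : 𝟭 C ⟶ T)
    (hη : ∀ X : D, η.app (F.obj X) ≫ ε.app X = 𝟙 (F.obj X)) :
    IsIso (η.app (⊤_ C)) := by
  -- key: for any g : ⊤_C ⟶ F X, T.map g ≫ ε.app X = terminal.from _ ≫ g
  have key : ∀ (X : D) (g : ⊤_ C ⟶ F.obj X),
      T.map g ≫ ε.app X = terminal.from (T.obj (⊤_ C)) ≫ g := by
    intro X g
    obtain ⟨x, hx, -⟩ := h2 X g
    have hfrom : T.map (inv (terminal.from (F.obj (⊤_ D)))) ≫ ε.app (⊤_ D)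
        = terminal.from (T.obj (⊤_ C)) ≫ inv (terminal.from (F.obj (⊤_ D))) := by
      rw [← cancel_mono (terminal.from (F.obj (⊤_ D)))]
      apply Subsingleton.elim
    have hnat := ε.naturality x
    dsimp at hnat
    rw [hx, Functor.map_comp, Category.assoc, hnat, ← Category.assoc, hfrom]
    simp
  refine ⟨terminal.from _, terminal.hom_ext _ _, ?_⟩
  apply (hT (⊤_ C)).hom_ext
  intro j
  have := key j.right j.hom
  simp only [Functor.RightExtension.coneAt_pt, Functor.RightExtension.mk_left,
    Functor.RightExtension.coneAt_π_app, Functor.RightExtension.mk_hom,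
    Category.assoc, Category.id_comp]
  change (terminal.from (T.obj (⊤_ C)) ≫ η.app (⊤_ C)) ≫ T.map j.hom ≫ ε.app j.right =
    𝟙 (T.obj (⊤_ C)) ≫ T.map j.hom ≫ ε.app j.right
  rw [Category.assoc, Category.id_comp]
  have hnatη := η.naturality j.hom
  dsimp at hnatη
  rw [← Category.assoc (η.app (⊤_ C)), ← hnatη, Category.assoc, hη, Category.comp_id, this]
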